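/- Let n be a nonnegative integer and let a, c be complex numbers with (a−n)_{2n} ≠ 0, (1−a)_n ≠ 0, (1+c)_{2n} ≠ 0, and (1+c−a)_n ≠ 0. Then the sum of the first n+1 terms of the series _3F_2(a, a−c−n, c ; (a−n)/2, (1+a−n)/2 ; 1/4), namely Σ_{k=0}^{n} [(a)_k (a−c−n)_k (c)_k / (k! ((a−n)/2)_k ((1+a−n)/2)_k)] (1/4)^k, equals [(1+c−a)_n (1+c)_n / (n! (1−a)_n)] · _4F_3(−n, 1+c+n, c, 1 ; (1+c)/2, (2+c)/2, 1+c−a ; 1/4). -/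

import Mathlib

open Finset

/-- The rising factorial (Pochhammer symbol) `(a)_k = a(a+1)⋯(a+k-1)`. -/
noncomputable def poch (a : ℂ) (k : ℕ) : ℂ := ∏ i ∈ Finset.range k, (a + i)

lemma poch_zero (a : ℂ) : poch a 0 = 1 := by simp [poch]

lemma poch_succ (a : ℂ) (k : ℕ) : poch a (k + 1) = poch a k * (a + k) := by
  simp [poch, Finset.prod_range_succ]

lemma poch_succ_left (a : ℂ) (k : ℕ) : poch a (k + 1) = a * poch (a + 1) k := by
  rw [poch, Finset.prod_range_succ', poch]
  simp only [Nat.cast_zero, add_zero]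
  rw [mul_comm]
  congr 1
  exact Finset.prod_congr rfl fun i _ => by push_cast; ring

lemma poch_add (a : ℂ) (m k : ℕ) : poch a (m + k) = poch a m * poch (a + m) k := by
  induction k with
  | zero => simp [poch_zero]
  | succ k ih =>
      rw [show m + (k+1) = (m+k)+1 by ring, poch_succ, ih, poch_succ]
      push_cast; ring

lemma poch_one (k : ℕ) : poch 1 k = (k.factorial : ℂ) := by
  induction k with
  | zero => simp [poch_zero]
  | succ k ih => rw [poch_succ, ih, Nat.factorial_succ]; push_cast; ring

lemma poch_nat (m l : ℕ) : poch ((m : ℂ) + 1) l * (m.factorial : ℂ) = ((m + l).factorial : ℂ) := by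
  have h := poch_add 1 m l
  rw [poch_one, poch_one] at h
  rw [show (1 : ℂ) + m = (m : ℂ) + 1 by ring] at h
  rw [mul_comm, ← h]

lemma poch_dup (x : ℂ) (k : ℕ) :
    poch (x / 2) k * poch ((x + 1) / 2) k * 4 ^ k = poch x (2 * k) := by
  induction k with
  | zero => simp [poch_zero]
  | succ k ih =>
      rw [show 2 * (k+1) = (2*k+1)+1 by ring, poch_succ, poch_succ, poch_succ, poch_succ, ← ih]
      push_cast; ring

lemma poch_neg (m : ℕ) : ∀ x : ℂ, poch (1 - x - m) m = (-1) ^ m * poch x m := by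
  induction m with
  | zero => intro x; simp [poch_zero]
  | succ m ih =>
      intro x
      rw [poch_succ, show (1 : ℂ) - x - ((m+1 : ℕ) : ℂ) = (1 - (x+1) - (m : ℂ)) by push_cast; ring,
        ih (x+1), poch_succ_left]
      push_cast; ring

lemma poch_vandermonde (u v : ℂ) : ∀ m : ℕ,
    poch (u + v) m = ∑ j ∈ range (m + 1), (m.choose j : ℂ) * poch u j * poch v (m - j) := by
  intro m
  induction m with
  | zero => simp [poch_zero]
  | succ m ih =>
      have step : poch (u + v) (m + 1)
          = (∑ j ∈ range (m + 1), (m.choose j : ℂ) * poch u (j+1) * poch v (m - j))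
            + ∑ j ∈ range (m + 1), (m.choose j : ℂ) * poch u j * poch v (m + 1 - j) := by
        rw [poch_succ, ih, Finset.sum_mul, ← Finset.sum_add_distrib]
        refine Finset.sum_congr rfl fun j hj => ?_
        have hjm : j ≤ m := Nat.lt_succ_iff.mp (Finset.mem_range.mp hj)
        have h2 : m + 1 - j = (m - j) + 1 := by omega
        have hc : ((m - j : ℕ) : ℂ) = (m : ℂ) - (j : ℂ) := by
          push_cast [Nat.cast_sub hjm]; ring
        rw [h2, poch_succ, poch_succ]
        linear_combination (-((m.choose j : ℂ) * poch u j * poch v (m - j))) * hc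
      have hS2 : (∑ j ∈ range (m + 1), (m.choose j : ℂ) * poch u j * poch v (m + 1 - j))
          = (∑ j ∈ range m, (m.choose (j+1) : ℂ) * poch u (j+1) * poch v (m - j))
            + poch v (m + 1) := by
        rw [Finset.sum_range_succ' (fun j => (m.choose j : ℂ) * poch u j * poch v (m + 1 - j)) m]
        simp only [Nat.choose_zero_right, Nat.cast_one, poch_zero, Nat.sub_zero, one_mul, mul_one]
        congr 1
        refine Finset.sum_congr rfl fun j hj => ?_
        have : m + 1 - (j + 1) = m - j := by omega
        rw [this]
      have hSx : (∑ j ∈ range (m + 1), (m.choose (j+1) : ℂ) * poch u (j+1) * poch v (m - j))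
          = ∑ j ∈ range m, (m.choose (j+1) : ℂ) * poch u (j+1) * poch v (m - j) := by
        rw [Finset.sum_range_succ]
        simp [Nat.choose_succ_self]
      have pas : ∀ j ∈ range (m + 1),
          (((m+1).choose (j+1) : ℕ) : ℂ) * poch u (j+1) * poch v (m + 1 - (j+1))
          = (m.choose j : ℂ) * poch u (j+1) * poch v (m - j)
            + (m.choose (j+1) : ℂ) * poch u (j+1) * poch v (m - j) := by
        intro j hj
        have : m + 1 - (j + 1) = m - j := by omega
        rw [this, Nat.choose_succ_succ]
        push_cast; ring
      rw [step, Finset.sum_range_succ' (fun j => (((m+1).choose j : ℕ) : ℂ) * poch u j * poch v (m + 1 - j)) (m+1)]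
      simp only [Nat.choose_zero_right, Nat.cast_one, poch_zero, Nat.sub_zero, one_mul, mul_one]
      rw [Finset.sum_congr rfl pas, Finset.sum_add_distrib, hS2, hSx]
      ring

lemma sum_tri_aux (n k : ℕ) (g : ℕ → ℂ) (hk : k ≤ n) :
    ∑ i ∈ range (n + 1 - k), g i = ∑ i ∈ range (n + 1), if k + i ≤ n then g i else 0 := by
  have h1 : ∑ i ∈ range (n + 1 - k), g i
      = ∑ i ∈ range (n + 1 - k), (if k + i ≤ n then g i else 0) :=
    Finset.sum_congr rfl fun i hi => (if_pos (by have := Finset.mem_range.mp hi; omega)).symm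
  rw [h1]
  exact Finset.sum_subset (Finset.range_subset_range.mpr (by omega))
    (fun i _ hni => if_neg (by simp only [Finset.mem_range, not_lt] at hni; omega))

lemma sum_triangle (n : ℕ) (f : ℕ → ℕ → ℂ) :
    ∑ k ∈ range (n + 1), ∑ i ∈ range (n + 1 - k), f k i
      = ∑ i ∈ range (n + 1), ∑ k ∈ range (n + 1 - i), f k i := by
  have l : ∀ h : ℕ → ℕ → ℂ, ∑ k ∈ range (n + 1), ∑ i ∈ range (n + 1 - k), h k i
      = ∑ k ∈ range (n + 1), ∑ i ∈ range (n + 1), if k + i ≤ n then h k i else 0 :=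
    fun h => Finset.sum_congr rfl fun k hk =>
      sum_tri_aux n k _ (by have := Finset.mem_range.mp hk; omega)
  rw [l f, l (fun i k => f k i), Finset.sum_comm]
  refine Finset.sum_congr rfl fun k _ => Finset.sum_congr rfl fun i _ => ?_
  rw [Nat.add_comm i k]

lemma sum_triangle' (n : ℕ) (g : ℕ → ℕ → ℂ) :
    ∑ K ∈ range (n + 1), ∑ i ∈ range (K + 1), g K i
      = ∑ i ∈ range (n + 1), ∑ k ∈ range (n + 1 - i), g (k + i) i := by
  have h1 : ∑ K ∈ range (n + 1), ∑ i ∈ range (K + 1), g K i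
      = ∑ K ∈ range (n + 1), ∑ i ∈ range (n + 1), if i ≤ K then g K i else 0 := by
    refine Finset.sum_congr rfl fun K hK => ?_
    have hKn : K ≤ n := by have := Finset.mem_range.mp hK; omega
    have h : ∑ i ∈ range (K + 1), g K i
        = ∑ i ∈ range (K + 1), if i ≤ K then g K i else 0 :=
      Finset.sum_congr rfl fun i hi => (if_pos (by have := Finset.mem_range.mp hi; omega)).symm
    rw [h]
    exact Finset.sum_subset (Finset.range_subset_range.mpr (by omega))
      (fun i _ hni => if_neg (by simp only [Finset.mem_range, not_lt] at hni; omega))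
  rw [h1, Finset.sum_comm]
  refine Finset.sum_congr rfl fun i hi => ?_
  have h2 : ∑ K ∈ Finset.Ico i (n + 1), (if i ≤ K then g K i else 0)
      = ∑ K ∈ range (n + 1), if i ≤ K then g K i else 0 :=
    Finset.sum_subset (by rw [Finset.range_eq_Ico]; exact Finset.Ico_subset_Ico (by omega) le_rfl)
      (fun K hK hnK => if_neg fun hiK =>
        hnK (Finset.mem_Ico.mpr ⟨hiK, Finset.mem_range.mp hK⟩))
  rw [← h2, Finset.sum_congr rfl (fun K hK => if_pos (Finset.mem_Ico.mp hK).1),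
    Finset.sum_Ico_eq_sum_range]
  exact Finset.sum_congr rfl fun k _ => by rw [Nat.add_comm i k]

lemma fact_nz (k : ℕ) : ((k.factorial : ℕ) : ℂ) ≠ 0 :=
  Nat.cast_ne_zero.mpr (Nat.factorial_ne_zero k)

lemma coeff_eq (n k i : ℕ) (h : k + i ≤ n) :
    (((n - k).choose i : ℕ) : ℂ) / (k.factorial : ℂ)
      = (((k + i).choose k : ℕ) : ℂ) * poch (((n - k - i : ℕ) : ℂ) + 1) i
        / ((k + i).factorial : ℂ) := by
  have e3 : poch (((n - k - i : ℕ) : ℂ) + 1) i * ((n - k - i).factorial : ℂ)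
      = (((n - k).factorial : ℕ) : ℂ) := by
    have := poch_nat (n - k - i) i
    rw [show n - k - i + i = n - k by omega] at this
    exact this
  have e1 : ((((k + i).choose k : ℕ) : ℂ)) * (k.factorial : ℂ) * (i.factorial : ℂ)
      = (((k + i).factorial : ℕ) : ℂ) := by
    have := Nat.choose_mul_factorial_mul_factorial (show k ≤ k + i by omega)
    rw [show k + i - k = i by omega] at this
    exact_mod_cast this
  have e2 : (((n - k).choose i : ℕ) : ℂ) * (i.factorial : ℂ) * ((n - k - i).factorial : ℂ)
      = (((n - k).factorial : ℕ) : ℂ) := by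
    have := Nat.choose_mul_factorial_mul_factorial (show i ≤ n - k by omega)
    rw [show n - k - i = n - k - i from rfl] at this
    exact_mod_cast this
  rw [div_eq_div_iff (fact_nz k) (fact_nz (k + i))]
  have hfnz : ((i.factorial : ℕ) : ℂ) * (((n - k - i).factorial : ℕ) : ℂ) ≠ 0 :=
    mul_ne_zero (fact_nz i) (fact_nz (n - k - i))
  apply mul_right_cancel₀ hfnz
  linear_combination ((((k + i).factorial : ℕ) : ℂ)) * e2
    - (poch (((n - k - i : ℕ) : ℂ) + 1) i * ((n - k - i).factorial : ℂ)) * e1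
    - (((k + i).factorial : ℕ) : ℂ) * e3

lemma key (n : ℕ) (x c : ℂ) :
    ∑ k ∈ range (n + 1),
        poch (x + c + ((2 * k : ℕ) : ℂ)) (n - k) * poch x k * poch c k / (k.factorial : ℂ)
      = ∑ k ∈ range (n + 1),
        poch (c + ((2 * (n - k) : ℕ) : ℂ) + 1) k * poch x k * poch c (n - k)
          / (k.factorial : ℂ) := by
  have hL : ∑ k ∈ range (n + 1),
        poch (x + c + ((2 * k : ℕ) : ℂ)) (n - k) * poch x k * poch c k / (k.factorial : ℂ)
      = ∑ k ∈ range (n + 1), ∑ i ∈ range (n + 1 - k),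
          (((n - k).choose i : ℕ) : ℂ) * poch x (k + i) * poch c (n - i)
            / (k.factorial : ℂ) := by
    refine Finset.sum_congr rfl fun k hk => ?_
    have hkn : k ≤ n := by have := Finset.mem_range.mp hk; omega
    have harg : x + c + ((2 * k : ℕ) : ℂ) = (x + k) + (c + k) := by push_cast; ring
    rw [harg, poch_vandermonde (x + (k : ℂ)) (c + (k : ℂ)) (n - k),
      show n - k + 1 = n + 1 - k by omega, Finset.sum_mul, Finset.sum_mul, Finset.sum_div]
    refine Finset.sum_congr rfl fun i hi => ?_
    have hi' : i ≤ n - k := by have := Finset.mem_range.mp hi; omega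
    have p1 : poch x (k + i) = poch x k * poch (x + k) i := poch_add x k i
    have p2 : poch c (n - i) = poch c k * poch (c + k) (n - k - i) := by
      have h := poch_add c k (n - k - i)
      rw [show k + (n - k - i) = n - i by omega] at h
      exact h
    rw [p1, p2]
    ring
  have hR : ∑ k ∈ range (n + 1),
        poch (c + ((2 * (n - k) : ℕ) : ℂ) + 1) k * poch x k * poch c (n - k)
          / (k.factorial : ℂ)
      = ∑ K ∈ range (n + 1), ∑ i ∈ range (K + 1),
          ((K.choose (K - i) : ℕ) : ℂ) * poch x K * poch c (n - i)
            * poch (((n - K : ℕ) : ℂ) + 1) i / (K.factorial : ℂ) := by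
    refine Finset.sum_congr rfl fun K hK => ?_
    have hKn : K ≤ n := by have := Finset.mem_range.mp hK; omega
    have harg : c + ((2 * (n - K) : ℕ) : ℂ) + 1
        = (c + ((n - K : ℕ) : ℂ)) + (((n - K : ℕ) : ℂ) + 1) := by push_cast; ring
    rw [harg, poch_vandermonde (c + ((n - K : ℕ) : ℂ)) (((n - K : ℕ) : ℂ) + 1) K,
      Finset.sum_mul, Finset.sum_mul, Finset.sum_div]
    rw [← Finset.sum_range_reflect (fun i => ((K.choose (K - i) : ℕ) : ℂ) * poch x K
        * poch c (n - i) * poch (((n - K : ℕ) : ℂ) + 1) i / (K.factorial : ℂ)) (K + 1)]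
    refine Finset.sum_congr rfl fun J hJ => ?_
    have hJ' : J ≤ K := by have := Finset.mem_range.mp hJ; omega
    rw [show K + 1 - 1 - J = K - J by omega, show K - (K - J) = J by omega]
    have p2 : poch c (n - (K - J)) = poch c (n - K) * poch (c + ((n - K : ℕ) : ℂ)) J := by
      have h := poch_add c (n - K) J
      rw [show n - K + J = n - (K - J) by omega] at h
      exact h
    rw [p2]
    ring
  rw [hL, hR, sum_triangle n (fun k i => (((n - k).choose i : ℕ) : ℂ) * poch x (k + i)
      * poch c (n - i) / (k.factorial : ℂ)),
    sum_triangle' n (fun K i => ((K.choose (K - i) : ℕ) : ℂ) * poch x K * poch c (n - i)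
      * poch (((n - K : ℕ) : ℂ) + 1) i / (K.factorial : ℂ))]
  refine Finset.sum_congr rfl fun i hi => Finset.sum_congr rfl fun k hk => ?_
  have hin : i ≤ n := by have := Finset.mem_range.mp hi; omega
  have hkn : k + i ≤ n := by have := Finset.mem_range.mp hk; omega
  rw [show k + i - i = k by omega, show n - (k + i) = n - k - i by omega]
  have hc := coeff_eq n k i hkn
  field_simp at hc ⊢
  linear_combination (poch x (k + i) * poch c (n - i)) * hc

lemma poch_mul_ne_zero_left {a : ℂ} {m k : ℕ} (h : poch a (m + k) ≠ 0) : poch a m ≠ 0 := by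
  rw [poch_add] at h
  exact fun hz => h (by rw [hz, zero_mul])

lemma poch_mul_ne_zero_right {a : ℂ} {m k : ℕ} (h : poch a (m + k) ≠ 0) :
    poch (a + m) k ≠ 0 := by
  rw [poch_add] at h
  exact fun hz => h (by rw [hz, mul_zero])

theorem stepA (n : ℕ) (a c : ℂ) (han : poch (a - (n : ℂ)) (2 * n) ≠ 0) :
    ∑ k ∈ range (n + 1),
      (poch a k * poch (a - c - (n : ℂ)) k * poch c k) /
        ((Nat.factorial k : ℂ) * poch ((a - (n : ℂ)) / 2) k *
          poch ((1 + a - (n : ℂ)) / 2) k) * (1 / 4 : ℂ) ^ k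
    = (poch (a - (n : ℂ)) n)⁻¹ * ∑ k ∈ range (n + 1),
        poch ((a - (n : ℂ) - c) + c + ((2 * k : ℕ) : ℂ)) (n - k) * poch (a - (n : ℂ) - c) k
          * poch c k / (k.factorial : ℂ) := by
  have hbn : poch (a - (n : ℂ)) n ≠ 0 := by
    have h2 : 2 * n = n + n := by ring
    rw [h2] at han
    exact poch_mul_ne_zero_left han
  rw [Finset.mul_sum]
  refine Finset.sum_congr rfl fun k hk => ?_
  have hkn : k ≤ n := by have := Finset.mem_range.mp hk; omega
  have hb2k : poch (a - (n : ℂ)) (2 * k) ≠ 0 := by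
    have h2 : 2 * n = 2 * k + (2 * n - 2 * k) := by omega
    rw [h2] at han
    exact poch_mul_ne_zero_left han
  have f1 : poch ((a - (n : ℂ)) / 2) k * poch (((a - (n : ℂ)) + 1) / 2) k * 4 ^ k
      = poch (a - (n : ℂ)) (2 * k) := poch_dup _ k
  have hH : poch ((a - (n : ℂ)) / 2) k * poch (((a - (n : ℂ)) + 1) / 2) k ≠ 0 := by
    intro hz
    rw [hz, zero_mul] at f1
    exact hb2k f1.symm
  have hH1 : poch ((a - (n : ℂ)) / 2) k ≠ 0 := fun hz => hH (by rw [hz, zero_mul])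
  have hH2 : poch (((a - (n : ℂ)) + 1) / 2) k ≠ 0 := fun hz => hH (by rw [hz, mul_zero])
  have f2 : poch (a - (n : ℂ)) (2 * k)
        * poch ((a - (n : ℂ)) + ((2 * k : ℕ) : ℂ)) (n - k) = poch (a - (n : ℂ)) (n + k) := by
    have h := poch_add (a - (n : ℂ)) (2 * k) (n - k)
    rw [show 2 * k + (n - k) = n + k by omega] at h
    exact h.symm
  have f3 : poch (a - (n : ℂ)) n * poch a k = poch (a - (n : ℂ)) (n + k) := by
    have h := poch_add (a - (n : ℂ)) n k
    rw [show (a - (n : ℂ)) + (n : ℂ) = a by ring] at h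
    exact h.symm
  have fc : poch ((a - (n : ℂ)) / 2) k * poch (((a - (n : ℂ)) + 1) / 2) k * 4 ^ k
        * poch ((a - (n : ℂ)) + ((2 * k : ℕ) : ℂ)) (n - k)
      = poch (a - (n : ℂ)) n * poch a k := by
    rw [f1, f2, f3]
  have harg1 : (1 + a - (n : ℂ)) / 2 = ((a - (n : ℂ)) + 1) / 2 := by ring
  have harg2 : a - c - (n : ℂ) = a - (n : ℂ) - c := by ring
  have harg3 : (a - (n : ℂ) - c) + c + ((2 * k : ℕ) : ℂ)
      = (a - (n : ℂ)) + ((2 * k : ℕ) : ℂ) := by ring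
  rw [harg1, harg2, harg3, one_div, inv_pow]
  have h4 : (4 : ℂ) ^ k ≠ 0 := pow_ne_zero _ (by norm_num)
  push_cast at fc ⊢
  field_simp [hH1, hH2, hbn, h4, fact_nz]
  linear_combination (-(poch (a - (n : ℂ) - c) k * poch c k * ((k.factorial : ℂ))⁻¹)) * fc

theorem stepB (n : ℕ) (a c : ℂ)
    (han : poch (a - (n : ℂ)) (2 * n) ≠ 0) (h1a : poch (1 - a) n ≠ 0)
    (hc2 : poch (1 + c) (2 * n) ≠ 0) (hca : poch (1 + c - a) n ≠ 0) :
    poch (1 + c - a) n * poch (1 + c) n / ((Nat.factorial n : ℂ) * poch (1 - a) n) *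
      ∑ k ∈ range (n + 1),
        (poch (-(n : ℂ)) k * poch (1 + c + (n : ℂ)) k * poch c k * poch 1 k) /
          ((Nat.factorial k : ℂ) * poch ((1 + c) / 2) k * poch ((2 + c) / 2) k *
            poch (1 + c - a) k) * (1 / 4 : ℂ) ^ k
    = (poch (a - (n : ℂ)) n)⁻¹ * ∑ k ∈ range (n + 1),
        poch (c + ((2 * (n - k) : ℕ) : ℂ) + 1) k * poch (a - (n : ℂ) - c) k
          * poch c (n - k) / (k.factorial : ℂ) := by
  have hbn : poch (a - (n : ℂ)) n ≠ 0 := by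
    have h2 : 2 * n = n + n := by ring
    rw [h2] at han
    exact poch_mul_ne_zero_left han
  have hQn : poch (1 + c) n ≠ 0 := by
    have h2 : 2 * n = n + n := by ring
    rw [h2] at hc2
    exact poch_mul_ne_zero_left hc2
  rw [← Finset.sum_range_reflect (fun k => poch (c + ((2 * (n - k) : ℕ) : ℂ) + 1) k
      * poch (a - (n : ℂ) - c) k * poch c (n - k) / (k.factorial : ℂ)) (n + 1),
    Finset.mul_sum, Finset.mul_sum]
  refine Finset.sum_congr rfl fun j hj => ?_
  have hjn : j ≤ n := by have := Finset.mem_range.mp hj; omega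
  beta_reduce
  rw [show n + 1 - 1 - j = n - j by omega, show n - (n - j) = j by omega]
  have hQ2j : poch (1 + c) (2 * j) ≠ 0 := by
    have h2 : 2 * n = 2 * j + (2 * n - 2 * j) := by omega
    rw [h2] at hc2
    exact poch_mul_ne_zero_left hc2
  have hE : poch (1 + c - a) j ≠ 0 := by
    have h2 : n = j + (n - j) := by omega
    rw [h2] at hca
    exact poch_mul_ne_zero_left hca
  -- dup for (1+c)
  have hdup : poch ((1 + c) / 2) j * poch (((1 + c) + 1) / 2) j * 4 ^ j
      = poch (1 + c) (2 * j) := poch_dup _ j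
  have hH : poch ((1 + c) / 2) j * poch (((1 + c) + 1) / 2) j ≠ 0 := by
    intro hz; rw [hz, zero_mul] at hdup; exact hQ2j hdup.symm
  have hH1 : poch ((1 + c) / 2) j ≠ 0 := fun hz => hH (by rw [hz, zero_mul])
  have hH2 : poch (((1 + c) + 1) / 2) j ≠ 0 := fun hz => hH (by rw [hz, mul_zero])
  -- sign lemmas
  have g3 : poch (1 - a) n = (-1) ^ n * poch (a - (n : ℂ)) n := by
    have h := poch_neg n (a - (n : ℂ))
    rw [show (1 : ℂ) - (a - (n : ℂ)) - (n : ℂ) = 1 - a by ring] at h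
    exact h
  have g4 : poch (1 + c - a) n = (-1) ^ n * poch (a - (n : ℂ) - c) n := by
    have h := poch_neg n (a - (n : ℂ) - c)
    rw [show (1 : ℂ) - (a - (n : ℂ) - c) - (n : ℂ) = 1 + c - a by ring] at h
    exact h
  have g6 : poch (a - (n : ℂ) - c) n
      = poch (a - (n : ℂ) - c) (n - j) * poch (a - c - (j : ℂ)) j := by
    have h := poch_add (a - (n : ℂ) - c) (n - j) j
    rw [show n - j + j = n by omega,
      show (a - (n : ℂ) - c) + ((n - j : ℕ) : ℂ) = a - c - (j : ℂ) by
        push_cast [Nat.cast_sub hjn]; ring] at h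
    exact h
  have g45 : poch (1 + c - a) n
      = (-1) ^ n * (poch (a - (n : ℂ) - c) (n - j) * poch (a - c - (j : ℂ)) j) := by
    rw [g4, g6]
  have g5 : poch (1 + c - a) j = (-1) ^ j * poch (a - c - (j : ℂ)) j := by
    have h := poch_neg j (a - c - (j : ℂ))
    rw [show (1 : ℂ) - (a - c - (j : ℂ)) - (j : ℂ) = 1 + c - a by ring] at h
    exact h
  have hZ : poch (a - c - (j : ℂ)) j ≠ 0 := fun hz => hE (by rw [g5, hz, mul_zero])
  -- N1
  have hpn : poch (((n - j : ℕ) : ℂ) + 1) j * ((n - j).factorial : ℂ)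
      = (n.factorial : ℂ) := by
    have h := poch_nat (n - j) j
    rw [show n - j + j = n by omega] at h
    exact h
  have hN1 : poch (-(n : ℂ)) j * ((n - j).factorial : ℂ) = (-1) ^ j * (n.factorial : ℂ) := by
    have h := poch_neg j (((n - j : ℕ) : ℂ) + 1)
    rw [show (1 : ℂ) - (((n - j : ℕ) : ℂ) + 1) - (j : ℂ) = -(n : ℂ) by
      push_cast [Nat.cast_sub hjn]; ring] at h
    rw [h]
    linear_combination ((-1 : ℂ) ^ j) * hpn
  have hN1d : poch (-(n : ℂ)) j = (-1) ^ j * (n.factorial : ℂ) / ((n - j).factorial : ℂ) :=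
    (eq_div_iff (fact_nz _)).mpr hN1
  -- N2
  have hN2m : poch (1 + c) n * poch (1 + c + (n : ℂ)) j = poch (1 + c) (n + j) := by
    have h := poch_add (1 + c) n j
    rw [show (1 : ℂ) + c + (n : ℂ) = 1 + c + (n : ℂ) by ring] at h
    exact h.symm
  have hN2d : poch (1 + c + (n : ℂ)) j = poch (1 + c) (n + j) / poch (1 + c) n :=
    (eq_div_iff hQn).mpr (by linear_combination hN2m)
  -- K1
  have hK1m : poch (1 + c) (2 * j) * poch (c + ((2 * j : ℕ) : ℂ) + 1) (n - j)
      = poch (1 + c) (n + j) := by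
    have h := poch_add (1 + c) (2 * j) (n - j)
    rw [show 2 * j + (n - j) = n + j by omega,
      show (1 : ℂ) + c + ((2 * j : ℕ) : ℂ) = c + ((2 * j : ℕ) : ℂ) + 1 by push_cast; ring] at h
    exact h.symm
  have hK1d : poch (c + ((2 * j : ℕ) : ℂ) + 1) (n - j)
      = poch (1 + c) (n + j) / poch (1 + c) (2 * j) :=
    (eq_div_iff hQ2j).mpr (by linear_combination hK1m)
  rw [poch_one j, g3, g45, g5, hN1d, hN2d, hK1d,
    show (2 + c) / 2 = ((1 + c) + 1) / 2 by ring, one_div, inv_pow]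
  have h4 : (4 : ℂ) ^ j ≠ 0 := pow_ne_zero _ (by norm_num)
  have hm1n : ((-1 : ℂ)) ^ n ≠ 0 := pow_ne_zero _ (by norm_num)
  have hm1j : ((-1 : ℂ)) ^ j ≠ 0 := pow_ne_zero _ (by norm_num)
  field_simp [hH1, hH2, hZ, hbn, hQn, hQ2j, h4, fact_nz]
  rw [div_eq_div_iff (mul_ne_zero (mul_ne_zero (fact_nz n) (fact_nz (n - j))) (fact_nz j)) (fact_nz (n - j))]
  linear_combination (-(poch (a - (n : ℂ) - c) (n - j) * poch (1 + c) (n + j) * poch c j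
    * (n.factorial : ℂ) * ((n - j).factorial : ℂ) * (j.factorial : ℂ))) * hdup

theorem stmt_19 (n : ℕ) (a c : ℂ)
    (han : poch (a - (n : ℂ)) (2 * n) ≠ 0) (h1a : poch (1 - a) n ≠ 0)
    (hc2 : poch (1 + c) (2 * n) ≠ 0) (hca : poch (1 + c - a) n ≠ 0) :
    ∑ k ∈ range (n + 1),
      (poch a k * poch (a - c - (n : ℂ)) k * poch c k) /
        ((Nat.factorial k : ℂ) * poch ((a - (n : ℂ)) / 2) k *
          poch ((1 + a - (n : ℂ)) / 2) k) * (1 / 4 : ℂ) ^ k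
    = poch (1 + c - a) n * poch (1 + c) n / ((Nat.factorial n : ℂ) * poch (1 - a) n) *
      ∑ k ∈ range (n + 1),
        (poch (-(n : ℂ)) k * poch (1 + c + (n : ℂ)) k * poch c k * poch 1 k) /
          ((Nat.factorial k : ℂ) * poch ((1 + c) / 2) k * poch ((2 + c) / 2) k *
            poch (1 + c - a) k) * (1 / 4 : ℂ) ^ k := by
  rw [stepA n a c han, stepB n a c han h1a hc2 hca]
  exact congrArg _ (key n (a - (n : ℂ) - c) c)
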